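/- Assume the Continuum Hypothesis (the cardinality of the continuum equals ℵ₁). Then there exists a Luzin set: an uncountable set S ⊆ ℝ such that for every meagre set M ⊆ ℝ, the intersection S ∩ M is countable. -/

import Mathlib

open Cardinal Set

/-- Singletons in ℝ are closed and nowhere dense. -/
lemma luzin_aux_singleton_nwd (r : ℝ) : IsClosed ({r} : Set ℝ) ∧ IsNowhereDense ({r} : Set ℝ) := by
  rw [isClosed_isNowhereDense_iff_compl]
  exact ⟨isOpen_compl_singleton, dense_compl_singleton r⟩

/-- The collection of closed subsets of ℝ has cardinality at most the continuum. -/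
lemma luzin_aux_card_closed :
    #{C : Set ℝ // IsClosed C ∧ IsNowhereDense C} ≤ Cardinal.continuum := by
  have hinj : Function.Injective
      (fun C : {C : Set ℝ // IsClosed C ∧ IsNowhereDense C} =>
        {pq : ℚ × ℚ | Set.Ioo (pq.1 : ℝ) (pq.2 : ℝ) ⊆ (C : Set ℝ)ᶜ}) := by
    intro C D h
    have key : ∀ (E : Set ℝ), IsClosed E →
        Eᶜ = ⋃ pq ∈ {pq : ℚ × ℚ | Set.Ioo (pq.1 : ℝ) (pq.2 : ℝ) ⊆ Eᶜ},
          Set.Ioo (pq.1 : ℝ) (pq.2 : ℝ) := by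
      intro E hE
      apply Set.Subset.antisymm
      · intro x hx
        obtain ⟨t, ht, hxt, hts⟩ :=
          Real.isTopologicalBasis_Ioo_rat.exists_subset_of_mem_open hx hE.isOpen_compl
        simp only [Set.mem_iUnion, Set.mem_setOf_eq] at ht ⊢
        obtain ⟨a, b, _, rfl⟩ := ht
        exact ⟨(a, b), hts, hxt⟩
      · simp only [Set.iUnion_subset_iff, Set.mem_setOf_eq]
        exact fun pq hpq => hpq
    have h1 := key (C : Set ℝ) C.2.1
    have h2 := key (D : Set ℝ) D.2.1
    have : (C : Set ℝ)ᶜ = (D : Set ℝ)ᶜ := by rw [h1, h2]; simp only at h ⊢; rw [h]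
    exact Subtype.ext (compl_injective this)
  calc #{C : Set ℝ // IsClosed C ∧ IsNowhereDense C} ≤ #(Set (ℚ × ℚ)) := Cardinal.mk_le_of_injective hinj
    _ = Cardinal.continuum := by
        simp [Cardinal.mk_set, Cardinal.mk_denumerable, Cardinal.two_power_aleph0]

/-- Assuming the Continuum Hypothesis, there exists a Luzin set: an uncountable
set of reals whose intersection with every meagre set is countable. -/
theorem exists_luzin_set_of_CH
    (CH : Cardinal.continuum = Cardinal.aleph 1) :
    ∃ S : Set ℝ, ¬ S.Countable ∧
      ∀ M : Set ℝ, IsMeagre M → (S ∩ M).Countable := by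
  classical
  have CH0 : (Cardinal.continuum : Cardinal.{0}) = Cardinal.aleph 1 := by
    apply Cardinal.lift_injective
    rw [Cardinal.lift_continuum, Cardinal.lift_aleph, Ordinal.lift_one]
    exact CH
  set κ := (Cardinal.aleph 1 : Cardinal.{0}).ord.ToType with hκ
  -- Every initial segment of κ is countable
  have hIio : ∀ a : κ, (Set.Iio a).Countable := by
    intro a
    rw [Cardinal.countable_iff_lt_aleph_one]
    exact Cardinal.mk_Iio_ord_toType a
  have hIic : ∀ a : κ, (Set.Iic a).Countable := by
    intro a
    have : Set.Iic a = Set.Iio a ∪ {a} := by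
      ext b; simp [le_iff_lt_or_eq]
    rw [this]
    exact (hIio a).union (Set.countable_singleton a)
  -- An enumeration of all closed nowhere dense subsets of ℝ
  have hnonempty : Nonempty {C : Set ℝ // IsClosed C ∧ IsNowhereDense C} :=
    ⟨⟨∅, isClosed_empty, isNowhereDense_empty⟩⟩
  obtain ⟨e⟩ : Nonempty ({C : Set ℝ // IsClosed C ∧ IsNowhereDense C} ↪ κ) := by
    rw [← Cardinal.le_def, hκ, Cardinal.mk_toType, Cardinal.card_ord]
    exact CH0 ▸ luzin_aux_card_closed
  set F : κ → Set ℝ := fun a => ((Function.invFun e a : {C : Set ℝ // IsClosed C ∧ IsNowhereDense C}) : Set ℝ) with hF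
  have hFsurj : ∀ C : Set ℝ, IsClosed C → IsNowhereDense C → ∃ a, F a = C := by
    intro C h1 h2
    refine ⟨e ⟨C, h1, h2⟩, ?_⟩
    simp only [hF, Function.leftInverse_invFun e.injective ⟨C, h1, h2⟩]
  have hFnwd : ∀ a : κ, IsNowhereDense (F a) := fun a =>
    (Function.invFun e a : {C : Set ℝ // IsClosed C ∧ IsNowhereDense C}).2.2
  -- the union of all sets up to stage a is meagre
  have hUmeagre : ∀ a : κ, IsMeagre (⋃ b ∈ Set.Iic a, F b) := by
    intro a
    rw [isMeagre_iff_countable_union_isNowhereDense]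
    refine ⟨F '' Set.Iic a, ?_, (hIic a).image F, ?_⟩
    · rintro t ⟨b, _, rfl⟩; exact hFnwd b
    · intro x hx
      simp only [Set.mem_iUnion] at hx
      obtain ⟨b, hb, hxb⟩ := hx
      exact ⟨F b, ⟨b, hb, rfl⟩, hxb⟩
  -- pick a point avoiding all sets up to stage a
  have hpick : ∀ a : κ, ∃ x : ℝ, x ∉ ⋃ b ∈ Set.Iic a, F b := by
    intro a
    have hd : Dense (⋃ b ∈ Set.Iic a, F b)ᶜ := dense_of_mem_residual (hUmeagre a)
    obtain ⟨x, hx⟩ := hd.nonempty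
    exact ⟨x, hx⟩
  choose x hx using hpick
  have hxF : ∀ {a b : κ}, b ≤ a → x a ∉ F b := by
    intro a b hba hmem
    exact hx a (Set.mem_biUnion hba hmem)
  refine ⟨Set.range x, ?_, ?_⟩
  · -- uncountable
    intro hS
    -- for each r, choose an index whose set is {r}
    have hsing : ∀ r : ℝ, ∃ a : κ, F a = {r} := fun r =>
      hFsurj {r} (luzin_aux_singleton_nwd r).1 (luzin_aux_singleton_nwd r).2
    choose G hG using hsing
    have hcover : (Set.univ : Set κ) ⊆ ⋃ r ∈ Set.range x, Set.Iio (G r) := by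
      intro a _
      have hmem : x a ∈ F (G (x a)) := by rw [hG]; exact rfl
      have : a < G (x a) := by
        by_contra hcon
        exact hxF (not_lt.mp hcon) hmem
      exact Set.mem_biUnion (Set.mem_range_self a) this
    have hcnt : (Set.univ : Set κ).Countable :=
      (Set.Countable.biUnion hS (fun r _ => hIio (G r))).mono hcover
    have : Countable κ := Set.countable_univ_iff.mp hcnt
    have h1 : #κ ≤ Cardinal.aleph0 := Cardinal.mk_le_aleph0
    rw [hκ, Cardinal.mk_toType, Cardinal.card_ord] at h1
    exact absurd (lt_of_lt_of_le Cardinal.aleph0_lt_aleph_one h1) (lt_irrefl _)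
  · -- intersection with meagre sets is countable
    intro M hM
    obtain ⟨T, hTnwd, hTcnt, hTsub⟩ := isMeagre_iff_countable_union_isNowhereDense.mp hM
    have hstage : ∀ t ∈ T, ∃ a : κ, t ⊆ F a := by
      intro t ht
      obtain ⟨a, ha⟩ := hFsurj (closure t) isClosed_closure (hTnwd t ht).closure
      exact ⟨a, ha ▸ subset_closure⟩
    have : Nonempty κ := ⟨e hnonempty.some⟩
    choose! G hG using hstage
    have hsub : Set.range x ∩ M ⊆ ⋃ t ∈ T, x '' Set.Iio (G t) := by
      rintro r ⟨⟨a, rfl⟩, hrM⟩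
      obtain ⟨t, ht, hrt⟩ := hTsub hrM
      have hmem : x a ∈ F (G t) := hG t ht hrt
      have : a < G t := by
        by_contra hcon
        exact hxF (not_lt.mp hcon) hmem
      exact Set.mem_biUnion ht ⟨a, this, rfl⟩
    exact (Set.Countable.biUnion hTcnt (fun t _ => (hIio (G t)).image x)).mono hsub
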